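/- For every integer l ≥ 1, π^{2l} = (−1)^{l+1} · ((2l)! / ((2^{2l−1} − 1) · B_{2l})) · ∑_{n=1}^{∞} H_n^{(2l−1)} / (n · 2^n), where B_{2l} is the 2l-th Bernoulli number and H_n^{(k)} are the generalized harmonic numbers. -/

import Mathlib

open Finset Real

/-- The generalized harmonic numbers: `genH k n = H_n^{(k)}`, defined by `H_n^{(0)} = 1`
and `H_n^{(k)} = ∑_{j=1}^{n} H_j^{(k−1)}/j` for `k ≥ 1`. -/
noncomputable def genH : ℕ → ℕ → ℝ
  | 0, _ => 1
  | (k+1), n => ∑ j ∈ Finset.Icc 1 n, genH k j / (j : ℝ)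



lemma aux_shift (f : ℕ → ℝ) (n : ℕ) :
    ∑ j ∈ Finset.Icc 1 (n+1), f j = ∑ j ∈ Finset.range (n+1), f (j+1) := by
  induction n with
  | zero => simp
  | succ n ih =>
    rw [Finset.sum_Icc_succ_top (by omega), ih, Finset.sum_range_succ, Finset.sum_range_succ, Finset.sum_range_succ]

lemma aux_alt (n : ℕ) :
    ∑ m ∈ Finset.range (n+1), (-1:ℝ)^m * ((n+1).choose (m+1)) = 1 := by
  have h := Int.alternating_sum_range_choose_of_ne (n := n+1) (by omega)
  have h2 : ((∑ i ∈ Finset.range (n+2), (-1:ℤ)^i * (n+1).choose i : ℤ) : ℝ) = 0 := by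
    rw [h]; norm_num
  push_cast at h2
  rw [Finset.sum_range_succ'] at h2
  have e : ∀ x : ℕ, (-1:ℝ)^(x+1) * ((n+1).choose (x+1) : ℝ)
      = -((-1:ℝ)^x * ((n+1).choose (x+1) : ℝ)) := fun x => by ring
  simp only [e, Finset.sum_neg_distrib, pow_zero, Nat.choose_zero_right] at h2
  push_cast at h2
  linarith

lemma aux_choose_div (j m : ℕ) :
    (((j+1).choose (m+1) : ℝ))/((j:ℝ)+1) = (j.choose m : ℝ)/((m:ℝ)+1) := by
  have h : (j+1) * j.choose m = (j+1).choose (m+1) * (m+1) := Nat.add_one_mul_choose_eq j m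
  have h' : ((j:ℝ)+1) * (j.choose m : ℝ) = ((j+1).choose (m+1) : ℝ) * ((m:ℝ)+1) := by
    exact_mod_cast congrArg (Nat.cast : ℕ → ℝ) h
  have hj : (j:ℝ)+1 ≠ 0 := by positivity
  have hm : (m:ℝ)+1 ≠ 0 := by positivity
  field_simp
  linarith

lemma aux_hockey (n m : ℕ) :
    ∑ j ∈ Finset.range (n+1), (((j+1).choose (m+1) : ℝ))/((j:ℝ)+1)
      = ((n+1).choose (m+1) : ℝ)/((m:ℝ)+1) := by
  simp only [aux_choose_div]
  rw [← Finset.sum_div]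
  have h2 : ∑ j ∈ Finset.range (n+1), j.choose m = (n+1).choose (m+1) := by
    rw [← Nat.sum_Icc_choose n m]
    apply (Finset.sum_subset _ _).symm
    · intro x hx; simp only [Finset.mem_Icc] at hx; simp only [Finset.mem_range]; omega
    · intro x _ hx
      simp only [Finset.mem_Icc, not_and, not_le] at hx
      rcases le_or_gt m x with h | h
      · exfalso; exact absurd (hx h) (by simp only [Finset.mem_range] at *; omega)
      · exact Nat.choose_eq_zero_of_lt h
  rw_mod_cast [h2]


lemma genH_eq (k : ℕ) : ∀ n : ℕ, genH k (n+1)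
    = ∑ m ∈ Finset.range (n+1), (-1:ℝ)^m * ((n+1).choose (m+1)) / ((m:ℝ)+1)^k := by
  induction k with
  | zero =>
    intro n
    show (1:ℝ) = _
    simp only [pow_zero, div_one]
    exact (aux_alt n).symm
  | succ k ih =>
    intro n
    show ∑ j ∈ Finset.Icc 1 (n+1), genH k j / (j:ℝ) = _
    rw [aux_shift (fun j => genH k j / (j:ℝ)) n]
    have step1 : ∀ j ∈ Finset.range (n+1), genH k (j+1) / ((j:ℕ)+1 : ℝ)
        = ∑ m ∈ Finset.range (n+1),
            (-1:ℝ)^m / ((m:ℝ)+1)^k * ((((j+1).choose (m+1)) : ℝ) / ((j:ℝ)+1)) := by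
      intro j hj
      rw [ih j]
      rw [Finset.sum_div]
      rw [← Finset.sum_subset (Finset.range_subset_range.mpr
        (by simp only [Finset.mem_range] at hj; omega : j+1 ≤ n+1))]
      · apply Finset.sum_congr rfl
        intro m _
        push_cast
        ring
      · intro m _ hm
        simp only [Finset.mem_range, not_lt] at hm
        rw [Nat.choose_eq_zero_of_lt (by omega)]
        simp
    push_cast
    rw [Finset.sum_congr rfl step1, Finset.sum_comm]
    apply Finset.sum_congr rfl
    intro m _
    rw [← Finset.mul_sum, aux_hockey n m, div_mul_div_comm, ← pow_succ]


lemma hasSum_choose_geom (m : ℕ) :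
    HasSum (fun n : ℕ => (n.choose m : ℝ) * (1/2)^n) 2 := by
  set f : ℕ → ℝ := fun n => (n.choose m : ℝ) * (1/2)^n with hf
  have h := hasSum_choose_mul_geometric_of_norm_lt_one (𝕜 := ℝ) m
    (r := 1/2) (by rw [Real.norm_eq_abs, abs_of_pos] <;> norm_num)
  have h2 := h.mul_left ((1/2 : ℝ)^m)
  have hval : (1/2:ℝ)^m * (1/(1-1/2:ℝ)^(m+1)) = 2 := by
    rw [show (1-1/2:ℝ) = 1/2 by norm_num, pow_succ]
    field_simp
  have hz : ∑ i ∈ Finset.range m, f i = 0 := by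
    apply Finset.sum_eq_zero
    intro i hi
    simp only [hf, Nat.choose_eq_zero_of_lt (Finset.mem_range.mp hi), Nat.cast_zero, zero_mul]
  have h3 : HasSum (fun n : ℕ => f (n + m)) (2 - ∑ i ∈ Finset.range m, f i) := by
    rw [hz, sub_zero, ← hval]
    convert h2 using 2 with n
    case e'_3 => rfl
    simp only [hf, pow_add]
    ring
  exact (hasSum_nat_add_iff' m).mp h3

lemma hasSum_choose_half (m : ℕ) :
    HasSum (fun n : ℕ => (((n+1).choose (m+1) : ℝ))/(((n:ℝ)+1) * 2^(n+1)))
      (1/((m:ℝ)+1)) := by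
  have h := (hasSum_choose_geom m).mul_left (1/(2*((m:ℝ)+1)))
  have hv : (1/(2*((m:ℝ)+1))) * 2 = 1/((m:ℝ)+1) := by
    field_simp
  rw [hv] at h
  convert h using 1 with n
  case e'_3 => rfl
  funext n
  have key := aux_choose_div n m
  have hn : ((n:ℝ)+1) ≠ 0 := by positivity
  have hm : ((m:ℝ)+1) ≠ 0 := by positivity
  calc (((n+1).choose (m+1) : ℝ))/(((n:ℝ)+1) * 2^(n+1))
      = ((((n+1).choose (m+1) : ℝ))/((n:ℝ)+1)) * (1/2^(n+1)) := by
        rw [div_mul_div_comm, mul_one]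
    _ = ((n.choose m : ℝ)/((m:ℝ)+1)) * (1/2^(n+1)) := by rw [key]
    _ = 1/(2*((m:ℝ)+1)) * ((n.choose m : ℝ) * (1/2)^n) := by
        rw [div_pow, one_pow, pow_succ]
        field_simp
        try ring
        try tauto




lemma S_eq (k : ℕ) (hk : 1 ≤ k) :
    ∑' n : ℕ, genH k (n+1) / (((n:ℝ)+1) * 2^(n+1))
      = ∑' m : ℕ, (-1:ℝ)^m / ((m:ℝ)+1)^(k+1) := by
  set f : ℕ → ℕ → ℝ := fun m n =>
    (-1:ℝ)^m * ((n+1).choose (m+1) : ℝ) / (((m:ℝ)+1)^k * (((n:ℝ)+1) * 2^(n+1))) with hf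
  set G : ℕ → ℕ → ℝ := fun m n =>
    (((n+1).choose (m+1) : ℝ)) / (((m:ℝ)+1)^k * (((n:ℝ)+1) * 2^(n+1))) with hG
  have habs : ∀ m n, |f m n| = G m n := by
    intro m n
    simp only [hf, hG, abs_div, abs_mul]
    rw [abs_pow, abs_neg, abs_one, one_pow, one_mul]
    congr 1
    · exact abs_of_nonneg (by positivity)
    · rw [abs_of_nonneg (by positivity), abs_of_nonneg (by positivity),
        abs_of_nonneg (by positivity)]
  have hGm : ∀ m : ℕ, HasSum (fun n => G m n) (1/((m:ℝ)+1)^(k+1)) := by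
    intro m
    have h := (hasSum_choose_half m).mul_left (1/((m:ℝ)+1)^k)
    have hv : (1/((m:ℝ)+1)^k) * (1/((m:ℝ)+1)) = 1/((m:ℝ)+1)^(k+1) := by
      rw [pow_succ]; field_simp
    rw [hv] at h
    convert h using 2 with n
    case e'_3 => rfl
    simp only [hG]
    field_simp
  have hsumG : Summable (Function.uncurry G) := by
    rw [summable_prod_of_nonneg (by intro p; simp only [Function.uncurry, hG]; positivity)]
    constructor
    · intro m; exact (hGm m).summable
    · apply Summable.congr (f := fun m : ℕ => 1/((m:ℝ)+1)^(k+1))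
      · have : Summable (fun n : ℕ => 1/(n:ℝ)^(k+1)) :=
          Real.summable_one_div_nat_pow.mpr (by omega)
        have := (summable_nat_add_iff 1).mpr this
        simpa using this
      · intro m; exact ((hGm m).tsum_eq).symm
  have hsumf : Summable (Function.uncurry f) := by
    rw [← summable_abs_iff]
    apply hsumG.congr
    intro ⟨m, n⟩
    exact (habs m n).symm
  have hfm : ∀ m : ℕ, HasSum (fun n => f m n) ((-1:ℝ)^m/((m:ℝ)+1)^(k+1)) := by
    intro m
    have h := (hasSum_choose_half m).mul_left ((-1:ℝ)^m/((m:ℝ)+1)^k)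
    have hv : ((-1:ℝ)^m/((m:ℝ)+1)^k) * (1/((m:ℝ)+1)) = (-1:ℝ)^m/((m:ℝ)+1)^(k+1) := by
      rw [pow_succ]; field_simp
    rw [hv] at h
    convert h using 2 with n
    case e'_3 => rfl
    simp only [hf]
    field_simp
  have step1 : ∀ n : ℕ, genH k (n+1) / (((n:ℝ)+1) * 2^(n+1)) = ∑' m : ℕ, f m n := by
    intro n
    rw [(tsum_eq_sum (s := Finset.range (n+1)) ?_)]
    · rw [genH_eq k n, Finset.sum_div]
      apply Finset.sum_congr rfl
      intro m _
      simp only [hf]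
      field_simp
    · intro m hm
      simp only [Finset.mem_range, not_lt] at hm
      simp only [hf, Nat.choose_eq_zero_of_lt (by omega : n+1 < m+1), Nat.cast_zero,
        mul_zero, zero_div]
  calc ∑' n : ℕ, genH k (n+1) / (((n:ℝ)+1) * 2^(n+1))
      = ∑' (n : ℕ) (m : ℕ), f m n := by
        apply tsum_congr; intro n; exact step1 n
    _ = ∑' (m : ℕ) (n : ℕ), f m n := (Summable.tsum_comm hsumf)
    _ = ∑' m : ℕ, (-1:ℝ)^m / ((m:ℝ)+1)^(k+1) := by
        apply tsum_congr; intro m; exact (hfm m).tsum_eq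

lemma hasSum_eta (l : ℕ) (hl : l ≠ 0) :
    HasSum (fun m : ℕ => (-1:ℝ)^m / ((m:ℝ)+1)^(2*l))
      ((1 - 2 * ((2:ℝ)^(2*l))⁻¹) *
        ((-1:ℝ)^(l+1) * 2^(2*l-1) * π^(2*l) * bernoulli (2*l) / (2*l).factorial)) := by
  have hV := hasSum_zeta_nat hl
  set V : ℝ := (-1:ℝ)^(l+1) * 2^(2*l-1) * π^(2*l) * bernoulli (2*l) / (2*l).factorial with hVdef
  set f : ℕ → ℝ := fun n => 1/(n:ℝ)^(2*l) with hfdef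
  set e : ℕ → ℝ := fun n => if Even n then f n else 0 with hedef
  have hf0 : f 0 = 0 := by
    simp only [hfdef, Nat.cast_zero, zero_pow (by omega : 2*l ≠ 0), div_zero]
  have hinj : Function.Injective (fun j : ℕ => 2*j) := fun a b h => by dsimp at h; omega
  have hvan : ∀ x ∉ Set.range (fun j : ℕ => 2*j), e x = 0 := by
    intro x hx
    have hne : ¬ Even x := by
      rintro ⟨r, hr⟩
      exact hx ⟨r, by dsimp; omega⟩
    simp only [hedef, if_neg hne]
  have hcomp : HasSum ((fun n => e n) ∘ (fun j : ℕ => 2*j)) (((2:ℝ)^(2*l))⁻¹ * V) := by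
    apply (hV.mul_left (((2:ℝ)^(2*l))⁻¹)).congr_fun
    intro j
    simp only [Function.comp_apply, hedef, if_pos (even_two_mul j), hfdef]
    push_cast
    rw [mul_pow, one_div, one_div, mul_inv]
  have he : HasSum e (((2:ℝ)^(2*l))⁻¹ * V) :=
    (Function.Injective.hasSum_iff hinj hvan).mp hcomp
  have hw : HasSum (fun n => f n - 2 * e n) (V - 2 * (((2:ℝ)^(2*l))⁻¹ * V)) :=
    hV.sub (he.mul_left 2)
  have hw0 : f 0 - 2 * e 0 = 0 := by
    simp only [hedef, if_pos (Even.zero), hf0]; ring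
  have hw1 := (hasSum_nat_add_iff' 1).mpr hw
  rw [Finset.sum_range_one, hw0, sub_zero] at hw1
  have : (1 - 2 * ((2:ℝ)^(2*l))⁻¹) * V = V - 2 * (((2:ℝ)^(2*l))⁻¹ * V) := by ring
  rw [this]
  apply hw1.congr_fun
  intro m
  rcases Nat.even_or_odd m with hev | hod
  · have h1 : ¬ Even (m+1) := by simp [Nat.even_add_one, hev]
    simp only [hedef, if_neg h1, hfdef, Even.neg_one_pow hev]
    push_cast
    ring
  · have h1 : Even (m+1) := by simp [Nat.even_add_one, Nat.not_even_iff_odd.mpr hod]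
    simp only [hedef, if_pos h1, hfdef, Odd.neg_one_pow hod]
    push_cast
    ring

/-- For every integer `l ≥ 1`,
`π^{2l} = (−1)^{l+1} ((2l)!/((2^{2l−1} − 1) B_{2l})) ∑_{n=1}^{∞} H_n^{(2l−1)}/(n·2^n)`,
where `B_{2l}` is the `2l`-th Bernoulli number. -/
theorem stmt18 (l : ℕ) (hl : 1 ≤ l) :
    Real.pi ^ (2 * l)
      = (-1 : ℝ) ^ (l + 1)
        * (((2 * l).factorial : ℝ) / ((2 ^ (2 * l - 1) - 1) * (bernoulli (2 * l) : ℝ)))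
        * ∑' n : ℕ, genH (2 * l - 1) (n + 1) / (((n : ℝ) + 1) * 2 ^ (n + 1)) := by
  have hl0 : l ≠ 0 := by omega
  have hk : 2 * l - 1 + 1 = 2 * l := by omega
  -- the sum equals the eta series
  have hS : ∑' n : ℕ, genH (2 * l - 1) (n + 1) / (((n : ℝ) + 1) * 2 ^ (n + 1))
      = ∑' m : ℕ, (-1:ℝ)^m / ((m:ℝ)+1)^(2*l) := by
    rw [S_eq (2*l-1) (by omega), hk]
  have heta := hasSum_eta l hl0
  set V : ℝ := (-1:ℝ)^(l+1) * 2^(2*l-1) * π^(2*l) * bernoulli (2*l) / (2*l).factorial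
    with hVdef
  have hSval : ∑' m : ℕ, (-1:ℝ)^m / ((m:ℝ)+1)^(2*l) = (1 - 2 * ((2:ℝ)^(2*l))⁻¹) * V :=
    heta.tsum_eq
  -- V ≥ 1
  have hV := hasSum_zeta_nat hl0
  have hV1 : (1:ℝ) ≤ V := by
    have h1 : (1:ℝ)/(1:ℕ)^(2*l) = 1 := by norm_num
    have := le_hasSum hV 1 (fun i _ => by positivity)
    rwa [h1] at this
  have hpi : π ^ (2*l) ≠ 0 := by positivity
  have hc : (2:ℝ)^(2*l-1) ≠ 0 := by positivity
  have hfact : ((2*l).factorial : ℝ) ≠ 0 := by positivity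
  have hB : (bernoulli (2*l) : ℝ) ≠ 0 := by
    intro h0
    rw [hVdef, h0] at hV1
    norm_num at hV1
  have hc1 : (2:ℝ)^(2*l-1) - 1 ≠ 0 := by
    have : (2:ℝ)^1 ≤ (2:ℝ)^(2*l-1) := by
      apply pow_le_pow_right₀ (by norm_num) (by omega)
    simp only [pow_one] at this
    intro h; nlinarith
  have hsq : (-1:ℝ)^(l+1) * (-1:ℝ)^(l+1) = 1 := by
    rw [← pow_add, show (l+1)+(l+1) = 2*(l+1) by ring, pow_mul]
    norm_num
  have h2c : (2:ℝ)^(2*l) = 2^(2*l-1) * 2 := by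
    rw [← pow_succ, hk]
  have key : (-1:ℝ)^(l+1) * V = 2^(2*l-1) * π^(2*l) * bernoulli (2*l) / (2*l).factorial := by
    rw [hVdef]
    calc (-1:ℝ)^(l+1) * ((-1:ℝ)^(l+1) * 2^(2*l-1) * π^(2*l) * bernoulli (2*l) / (2*l).factorial)
        = ((-1:ℝ)^(l+1) * (-1:ℝ)^(l+1)) *
            (2^(2*l-1) * π^(2*l) * bernoulli (2*l) / (2*l).factorial) := by ring
      _ = _ := by rw [hsq, one_mul]
  rw [hS, hSval]
  calc π ^ (2*l)
      = ((-1:ℝ)^(l+1) * V) * (((2*l).factorial : ℝ) * (2^(2*l) - 2))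
          / ((2^(2*l-1) - 1) * bernoulli (2*l) * 2^(2*l)) := by
        rw [key, h2c]
        field_simp
    _ = (-1 : ℝ) ^ (l + 1)
        * (((2 * l).factorial : ℝ) / ((2 ^ (2 * l - 1) - 1) * (bernoulli (2 * l) : ℝ)))
        * ((1 - 2 * ((2:ℝ)^(2*l))⁻¹) * V) := by
        rw [h2c]
        field_simp
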